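/- Let G_t(x) := (1/2)·1_{|x|<t} (t ≥ 0, x ∈ ℝ) be the one-dimensional wave kernel. For t ∈ [0,1], j ≥ 0 and y ∈ ℝ define K_{t,j}(y) := 2^{j} ∫_{|z|<2} |G_t(y − 2^{−j} z) − G_t(y)| dz. Then: (i) K_{t,j}(y) = 0 whenever |y| ≥ t + 2; and (ii) there exists a finite constant C such that sup_{j ≥ 0} sup_{t ∈ [0,1]} ∫_ℝ K_{t,j}(y) dy ≤ C. -/

import Mathlib

open MeasureTheory ENNReal

noncomputable section

/-- Convolution on `ℝ`. -/
def conv1 (f g : ℝ → ℝ) : ℝ → ℝ := fun x => ∫ y, f (x - y) * g y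

/-- Weighted `L^p` norm on `ℝ` with exponential weight `e^{-μ|x|}`, valued in `[0,∞]`. -/
def wLp1 (p μ : ℝ) (f : ℝ → ℝ) : ℝ≥0∞ :=
  (∫⁻ x, ENNReal.ofReal (|f x| ^ p * Real.exp (-μ * |x|))) ^ (1 / p)

/-- One-dimensional wave kernel `G_t(x) = (1/2)·1_{|x|<t}`. -/
def G1 (t x : ℝ) : ℝ := if |x| < t then 1 / 2 else 0

/-- The quantity `K_{t,j}(y) := 2^j ∫_{|z|<2} |G_t(y - 2^{-j}z) - G_t(y)| dz`, valued in `[0,∞]`. -/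
def K1 (t : ℝ) (j : ℕ) (y : ℝ) : ℝ≥0∞ :=
  ENNReal.ofReal ((2 : ℝ) ^ j) *
    ∫⁻ z in Metric.ball (0 : ℝ) 2,
      ENNReal.ofReal |G1 t (y - (2 : ℝ) ^ (-(j : ℝ)) * z) - G1 t y|

lemma ofReal_add_neg (w : ℝ) : ENNReal.ofReal w + ENNReal.ofReal (-w) = ENNReal.ofReal |w| := by
  rcases le_total 0 w with h | h
  · simp [abs_of_nonneg h, ENNReal.ofReal_of_nonpos (neg_nonpos.mpr h)]
  · simp [abs_of_nonpos h, ENNReal.ofReal_of_nonpos h]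

lemma keyA (t w : ℝ) :
    ∫⁻ y, ENNReal.ofReal |G1 t (y - w) - G1 t y| ≤ ENNReal.ofReal (2 * |w|) := by
  set S : Set ℝ := (Metric.ball w t \ Metric.ball 0 t) ∪ (Metric.ball 0 t \ Metric.ball w t) with hS
  have hSm : MeasurableSet S :=
    (measurableSet_ball.diff measurableSet_ball).union
      (measurableSet_ball.diff measurableSet_ball)
  have h1 : ∀ y : ℝ, y ∈ Metric.ball w t ↔ |y - w| < t := by
    intro y; simp [Metric.mem_ball, Real.dist_eq]
  have h2 : ∀ y : ℝ, y ∈ Metric.ball (0:ℝ) t ↔ |y| < t := by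
    intro y; simp [Metric.mem_ball, Real.dist_eq]
  have hb : ∀ y, ENNReal.ofReal |G1 t (y - w) - G1 t y| ≤ S.indicator (fun _ => 1) y := by
    intro y
    by_cases hA : |y - w| < t <;> by_cases hB : |y| < t
    · simp [G1, hA, hB]
    · have hyS : y ∈ S := Or.inl ⟨(h1 y).mpr hA, fun h => hB ((h2 y).mp h)⟩
      rw [Set.indicator_of_mem hyS]
      simp only [G1, if_pos hA, if_neg hB]
      rw [show |(1:ℝ)/2 - 0| = 1/2 by norm_num]
      exact le_trans (le_of_eq rfl) (by norm_num [ENNReal.ofReal_le_one])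
    · have hyS : y ∈ S := Or.inr ⟨(h2 y).mpr hB, fun h => hA ((h1 y).mp h)⟩
      rw [Set.indicator_of_mem hyS]
      simp only [G1, if_neg hA, if_pos hB]
      rw [show |(0:ℝ) - 1/2| = 1/2 by norm_num]
      exact (by norm_num [ENNReal.ofReal_le_one])
    · simp [G1, hA, hB]
  have hS1 : volume (Metric.ball w t \ Metric.ball 0 t) ≤ ENNReal.ofReal |w| := by
    have hsub : Metric.ball w t \ Metric.ball 0 t ⊆
        Set.Ico t (w + t) ∪ Set.Ioc (w - t) (-t) := by
      rintro y ⟨hy1, hy2⟩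
      have hA := (h1 y).mp hy1
      have hB : t ≤ |y| := not_lt.mp fun h => hy2 ((h2 y).mpr h)
      obtain ⟨hl, hr⟩ := abs_lt.mp hA
      rcases le_abs.mp hB with h | h
      · exact Or.inl ⟨h, by linarith⟩
      · exact Or.inr ⟨by linarith, by linarith⟩
    calc volume (Metric.ball w t \ Metric.ball 0 t)
        ≤ volume (Set.Ico t (w + t) ∪ Set.Ioc (w - t) (-t)) := measure_mono hsub
      _ ≤ volume (Set.Ico t (w + t)) + volume (Set.Ioc (w - t) (-t)) := measure_union_le _ _
      _ = ENNReal.ofReal w + ENNReal.ofReal (-w) := by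
          rw [Real.volume_Ico, Real.volume_Ioc]; ring_nf
      _ = ENNReal.ofReal |w| := ofReal_add_neg w
  have hS2 : volume (Metric.ball 0 t \ Metric.ball w t) ≤ ENNReal.ofReal |w| := by
    have hsub : Metric.ball (0:ℝ) t \ Metric.ball w t ⊆
        Set.Ico (w + t) t ∪ Set.Ioc (-t) (w - t) := by
      rintro y ⟨hy1, hy2⟩
      have hB := (h2 y).mp hy1
      have hA : t ≤ |y - w| := not_lt.mp fun h => hy2 ((h1 y).mpr h)
      obtain ⟨hl, hr⟩ := abs_lt.mp hB
      rcases le_abs.mp hA with h | h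
      · exact Or.inl ⟨by linarith, hr⟩
      · exact Or.inr ⟨hl, by linarith⟩
    calc volume (Metric.ball (0:ℝ) t \ Metric.ball w t)
        ≤ volume (Set.Ico (w + t) t ∪ Set.Ioc (-t) (w - t)) := measure_mono hsub
      _ ≤ volume (Set.Ico (w + t) t) + volume (Set.Ioc (-t) (w - t)) := measure_union_le _ _
      _ = ENNReal.ofReal (-w) + ENNReal.ofReal w := by
          rw [Real.volume_Ico, Real.volume_Ioc]; ring_nf
      _ = ENNReal.ofReal |w| := by rw [add_comm]; exact ofReal_add_neg w
  calc ∫⁻ y, ENNReal.ofReal |G1 t (y - w) - G1 t y|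
      ≤ ∫⁻ y, S.indicator (fun _ => 1) y := lintegral_mono hb
    _ = volume S := by rw [lintegral_indicator hSm]; simp
    _ ≤ ENNReal.ofReal |w| + ENNReal.ofReal |w| := le_trans (measure_union_le _ _) (add_le_add hS1 hS2)
    _ = ENNReal.ofReal (2 * |w|) := by
        rw [← ENNReal.ofReal_add (abs_nonneg w) (abs_nonneg w)]; ring_nf

lemma measurable_G1 (t : ℝ) : Measurable (G1 t) := by
  unfold G1
  exact Measurable.ite (measurableSet_lt continuous_abs.measurable measurable_const)
    measurable_const measurable_const

/-- support and uniform `L¹` bound for `K_{t,j}` in dimension 1. -/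


theorem stmt12 :
    (∀ t ∈ Set.Icc (0 : ℝ) 1, ∀ j : ℕ, ∀ y : ℝ, t + 2 ≤ |y| → K1 t j y = 0) ∧
      ∃ C : ℝ, ∀ j : ℕ, ∀ t ∈ Set.Icc (0 : ℝ) 1,
        ∫⁻ y : ℝ, K1 t j y ≤ ENNReal.ofReal C := by
  constructor
  · rintro t ⟨ht0, ht1⟩ j y hy
    unfold K1
    have h0 : ∀ z, z ∈ Metric.ball (0:ℝ) 2 →
        ENNReal.ofReal |G1 t (y - (2:ℝ) ^ (-(j:ℝ)) * z) - G1 t y| = (fun _ : ℝ => (0:ℝ≥0∞)) z := by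
      intro z hz
      have hz2 : |z| < 2 := by simpa [Real.dist_eq] using hz
      have hc0 : (0:ℝ) < (2:ℝ) ^ (-(j:ℝ)) := Real.rpow_pos_of_pos two_pos _
      have hc1 : (2:ℝ) ^ (-(j:ℝ)) ≤ 1 :=
        Real.rpow_le_one_of_one_le_of_nonpos one_le_two (by simp)
      have habs : |(2:ℝ) ^ (-(j:ℝ)) * z| ≤ 2 := by
        rw [abs_mul, abs_of_pos hc0]
        nlinarith [abs_nonneg z]
      have h1 : ¬ |y| < t := by intro h; linarith
      have h2 : ¬ |y - (2:ℝ) ^ (-(j:ℝ)) * z| < t := by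
        intro h
        have := abs_sub_abs_le_abs_sub y ((2:ℝ) ^ (-(j:ℝ)) * z)
        linarith
      simp only [G1, if_neg h1, if_neg h2]
      simp
    rw [setLIntegral_congr_fun measurableSet_ball h0, lintegral_zero, mul_zero]
  · refine ⟨16, fun j t _ => ?_⟩
    set c : ℝ := (2:ℝ) ^ (-(j:ℝ)) with hcdef
    have hc0 : (0:ℝ) < c := Real.rpow_pos_of_pos two_pos _
    have hc1 : c ≤ 1 := Real.rpow_le_one_of_one_le_of_nonpos one_le_two (by simp)
    have hmeas : Measurable fun p : ℝ × ℝ => ENNReal.ofReal |G1 t (p.1 - c * p.2) - G1 t p.1| :=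
      ENNReal.measurable_ofReal.comp
        ((((measurable_G1 t).comp (measurable_fst.sub (measurable_snd.const_mul c))).sub
          ((measurable_G1 t).comp measurable_fst)).abs)
    unfold K1
    rw [lintegral_const_mul' _ _ ENNReal.ofReal_ne_top]
    have hswap :
        (∫⁻ y : ℝ, ∫⁻ z in Metric.ball (0:ℝ) 2, ENNReal.ofReal |G1 t (y - c * z) - G1 t y|)
          = ∫⁻ z in Metric.ball (0:ℝ) 2, ∫⁻ y : ℝ, ENNReal.ofReal |G1 t (y - c * z) - G1 t y| :=
      lintegral_lintegral_swap hmeas.aemeasurable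
    rw [hswap]
    have hbound : (∫⁻ z in Metric.ball (0:ℝ) 2, ∫⁻ y : ℝ,
        ENNReal.ofReal |G1 t (y - c * z) - G1 t y|) ≤
        ∫⁻ _ in Metric.ball (0:ℝ) 2, ENNReal.ofReal (4 * c) := by
      refine setLIntegral_mono measurable_const fun z hz => ?_
      have hz2 : |z| < 2 := by simpa [Real.dist_eq] using hz
      refine le_trans (keyA t (c * z)) (ENNReal.ofReal_le_ofReal ?_)
      rw [abs_mul, abs_of_pos hc0]
      nlinarith [abs_nonneg z]
    refine le_trans (mul_le_mul_right hbound _) ?_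
    rw [setLIntegral_const, Real.volume_ball]
    rw [← ENNReal.ofReal_mul (by positivity), ← ENNReal.ofReal_mul (by positivity)]
    refine ENNReal.ofReal_le_ofReal ?_
    have hone : (2:ℝ) ^ j * c = 1 := by
      rw [hcdef, ← Real.rpow_natCast 2 j, ← Real.rpow_add two_pos]
      simp
    nlinarith [hone]
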